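/- Let 0 < q < 1. The Mellin transform of the function h(t) = ∑_{i=0}^{∞} 1/(1 + t q^{−i}), t > 0, exists for complex s with 0 < Re(s) < 1 and equals ∫_0^∞ t^{s−1} h(t) dt = (1/(1 − q^s)) · π / sin(π s). -/

import Mathlib

open MeasureTheory Set Complex

namespace MellinOfHAux

lemma image_phi : (fun x : ℝ => x / (1 - x)) '' (Ioo 0 1) = Ioi 0 := by
  ext t
  constructor
  · rintro ⟨x, ⟨hx0, hx1⟩, rfl⟩
    exact div_pos hx0 (by linarith)
  · intro ht
    have ht' : (0:ℝ) < t := ht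
    refine ⟨t / (1 + t), ⟨div_pos ht' (by linarith), (div_lt_one (by linarith)).2 (by linarith)⟩, ?_⟩
    field_simp
    ring

lemma deriv_phi {x : ℝ} (hx : x ∈ Ioo (0:ℝ) 1) :
    HasDerivAt (fun x : ℝ => x / (1 - x)) (((1 - x) ^ 2)⁻¹) x := by
  obtain ⟨hx0, hx1⟩ := hx
  have h1 : (1 : ℝ) - x ≠ 0 := by linarith
  have := (hasDerivAt_id x).div ((hasDerivAt_id x).const_sub 1) h1
  rw [show ((1 - x) ^ 2)⁻¹ = (1 * (1 - id x) - id x * -1) / (1 - id x) ^ 2 by simp only [id]; ring]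
  exact this

lemma injOn_phi : InjOn (fun x : ℝ => x / (1 - x)) (Ioo 0 1) := by
  rintro x ⟨hx0, hx1⟩ y ⟨hy0, hy1⟩ hxy
  have h1 : (1:ℝ) - x ≠ 0 := by linarith
  have h2 : (1:ℝ) - y ≠ 0 := by linarith
  field_simp at hxy
  nlinarith

lemma key_pointwise (s : ℂ) {x : ℝ} (hx : x ∈ Ioo (0:ℝ) 1) :
    |(((1 - x) ^ 2)⁻¹ : ℝ)| • ((((x / (1 - x) : ℝ)) : ℂ) ^ (s - 1) *
      ((1 / (1 + x / (1 - x)) : ℝ) : ℂ)) =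
      (x : ℂ) ^ (s - 1) * ((1:ℂ) - x) ^ (1 - s - 1) := by
  obtain ⟨hx0, hx1⟩ := hx
  have hu : (0:ℝ) < 1 - x := by linarith
  have hu' : ((1 - x : ℝ) : ℂ) ≠ 0 := ofReal_ne_zero.mpr hu.ne'
  have h1 : (1 : ℝ) + x / (1 - x) = (1 - x)⁻¹ := by field_simp; ring
  have h2 : (x / (1 - x) : ℝ) = x * (1 - x)⁻¹ := by ring
  have hco : ((1:ℂ) - (x:ℂ)) = ((1 - x : ℝ) : ℂ) := by push_cast; ring
  have hu2 : (1:ℂ) - (x:ℂ) ≠ 0 := by rw [hco]; exact hu'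
  have hB : ((1:ℂ) - (x:ℂ)) ^ (s-1) ≠ 0 := by
    simp only [ne_eq, cpow_eq_zero_iff, not_and_or]
    exact Or.inl hu2
  rw [h1, h2, ofReal_mul, mul_cpow_ofReal_nonneg hx0.le (by positivity), ofReal_inv,
    inv_cpow _ _ (by rw [Complex.arg_ofReal_of_nonneg hu.le]; exact Real.pi_pos.ne),
    abs_of_pos (by positivity), real_smul,
    show (1:ℂ) - s - 1 = -(s-1) + -1 by ring, cpow_add _ _ (hco ▸ hu'), cpow_neg, cpow_neg_one]
  simp only [one_div, inv_inv, ofReal_inv, ofReal_pow, ofReal_sub, ofReal_one]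
  field_simp

lemma hasMellin_base {s : ℂ} (hs0 : 0 < s.re) (hs1 : s.re < 1) :
    HasMellin (fun t : ℝ => ((1/(1+t) : ℝ) : ℂ)) s
      ((Real.pi : ℂ) / Complex.sin (Real.pi * s)) := by
  have hv : 0 < (1 - s).re := by simp [Complex.sub_re]; linarith
  set g : ℝ → ℂ := fun t : ℝ => (t:ℂ) ^ (s-1) * ((1/(1+t) : ℝ) : ℂ) with hg
  have hderiv : ∀ x ∈ Ioo (0:ℝ) 1,
      HasDerivWithinAt (fun x : ℝ => x / (1 - x)) (((1 - x) ^ 2)⁻¹) (Ioo 0 1) x :=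
    fun x hx => (deriv_phi hx).hasDerivWithinAt
  have hbeta : IntervalIntegrable (fun x : ℝ => (x:ℂ) ^ (s - 1) * ((1:ℂ) - x) ^ (1 - s - 1))
      volume 0 1 := by
    have := Complex.betaIntegral_convergent hs0 hv
    simpa [sub_sub] using this
  have hbetaIoo : IntegrableOn (fun x : ℝ => (x:ℂ) ^ (s - 1) * ((1:ℂ) - x) ^ (1 - s - 1))
      (Ioo 0 1) volume := by
    have := (intervalIntegrable_iff_integrableOn_Ioc_of_le (by norm_num)).mp hbeta
    exact this.mono_set Ioo_subset_Ioc_self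
  have hconv : MellinConvergent (fun t : ℝ => ((1/(1+t) : ℝ) : ℂ)) s := by
    have hiff := integrableOn_image_iff_integrableOn_abs_deriv_smul measurableSet_Ioo
      hderiv injOn_phi g
    rw [image_phi] at hiff
    have : IntegrableOn (fun x : ℝ => |(((1 - x) ^ 2)⁻¹ : ℝ)| • g (x / (1 - x)))
        (Ioo 0 1) volume :=
      hbetaIoo.congr_fun (fun x hx => (key_pointwise s hx).symm) measurableSet_Ioo
    have hg' := hiff.mpr this
    simpa only [MellinConvergent, smul_eq_mul] using hg'
  refine ⟨hconv, ?_⟩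
  have heq : mellin (fun t : ℝ => ((1/(1+t) : ℝ) : ℂ)) s = Complex.betaIntegral s (1 - s) := by
    rw [mellin]
    simp_rw [smul_eq_mul]
    rw [← image_phi, integral_image_eq_integral_abs_deriv_smul measurableSet_Ioo hderiv injOn_phi]
    rw [setIntegral_congr_fun measurableSet_Ioo (fun x hx => key_pointwise s hx)]
    rw [Complex.betaIntegral, intervalIntegral.integral_of_le (by norm_num : (0:ℝ) ≤ 1),
      ← integral_Ioc_eq_integral_Ioo]
  rw [heq]
  have hG := Complex.Gamma_mul_Gamma_eq_betaIntegral hs0 hv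
  rw [add_sub_cancel, Complex.Gamma_one, one_mul] at hG
  rw [← hG, Complex.Gamma_mul_Gamma_one_sub]

lemma hasMellin_scaled {s : ℂ} (hs0 : 0 < s.re) (hs1 : s.re < 1) {a : ℝ} (ha : 0 < a) :
    HasMellin (fun t : ℝ => ((1/(1+t*a) : ℝ) : ℂ)) s
      ((a:ℂ) ^ (-s) * ((Real.pi : ℂ) / Complex.sin (Real.pi * s))) := by
  obtain ⟨hc, hm⟩ := hasMellin_base hs0 hs1
  constructor
  · have := (MellinConvergent.comp_mul_left
      (f := fun t : ℝ => ((1/(1+t) : ℝ) : ℂ)) (s := s) ha).mpr hc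
    simpa [mul_comm] using this
  · have := mellin_comp_mul_right (fun t : ℝ => ((1/(1+t) : ℝ) : ℂ)) s ha
    rw [hm] at this
    simpa [smul_eq_mul] using this

lemma cpow_zpow_eq {q : ℝ} (hq0 : 0 < q) (s : ℂ) (i : ℕ) :
    (((q ^ (-(i:ℤ)) : ℝ)) : ℂ) ^ (-s) = ((q:ℂ) ^ s) ^ i := by
  have hb : (0:ℝ) < q ^ (-(i:ℤ)) := zpow_pos hq0 _
  rw [cpow_def_of_ne_zero (ofReal_ne_zero.mpr hb.ne'), ← Complex.ofReal_log hb.le,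
      Real.log_zpow,
      cpow_def_of_ne_zero (ofReal_ne_zero.mpr hq0.ne'), ← Complex.ofReal_log hq0.le,
      ← Complex.exp_nat_mul]
  congr 1
  push_cast
  ring

lemma rpow_zpow_eq {q : ℝ} (hq0 : 0 < q) (σ : ℝ) (i : ℕ) :
    ((q ^ (-(i:ℤ)) : ℝ)) ^ (-σ) = (q ^ σ) ^ i := by
  rw [show ((q ^ (-(i:ℤ)) : ℝ)) = q ^ ((-(i:ℤ) : ℤ) : ℝ) from (Real.rpow_intCast q _).symm,
      ← Real.rpow_natCast (q ^ σ) i, ← Real.rpow_mul hq0.le, ← Real.rpow_mul hq0.le]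
  push_cast
  ring_nf

end MellinOfHAux

open MellinOfHAux

/-- For `0 < q < 1`, the Mellin transform of
`h(t) = ∑_{i=0}^{∞} 1/(1 + t q^{-i})` exists in the strip `0 < Re s < 1` and equals
`(1/(1 - q^s)) · π / sin(π s)`. -/
theorem mellin_of_h (q : ℝ) (hq0 : 0 < q) (hq1 : q < 1)
    (h : ℝ → ℂ) (hh : ∀ t : ℝ, h t = ((∑' i : ℕ, 1 / (1 + t * q ^ (-(i : ℤ))) : ℝ) : ℂ))
    (s : ℂ) (hs0 : 0 < s.re) (hs1 : s.re < 1) :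
    MellinConvergent h s ∧
      mellin h s = (1 / (1 - (q : ℂ) ^ s)) * ((Real.pi : ℂ) / Complex.sin (Real.pi * s)) := by
  set σ := s.re with hσ
  set B : ℂ := (Real.pi : ℂ) / Complex.sin (Real.pi * s) with hB
  set Bσ : ℂ := (Real.pi : ℂ) / Complex.sin (Real.pi * (σ:ℂ)) with hBσ
  set a : ℕ → ℝ := fun i => q ^ (-(i:ℤ)) with ha
  have hapos : ∀ i, 0 < a i := fun i => zpow_pos hq0 _
  set g : ℕ → ℝ → ℝ := fun i t => 1 / (1 + t * a i) with hg
  set F : ℕ → ℝ → ℂ := fun i t => (t:ℂ) ^ (s-1) * ((g i t : ℝ) : ℂ) with hF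
  set Fσ : ℕ → ℝ → ℂ := fun i t => (t:ℂ) ^ ((σ:ℂ)-1) * ((g i t : ℝ) : ℂ) with hFσ
  have hσre : ((σ:ℂ)).re = σ := by simp
  have hMi : ∀ i, HasMellin (fun t : ℝ => ((g i t : ℝ) : ℂ)) s ((a i : ℂ) ^ (-s) * B) :=
    fun i => hasMellin_scaled hs0 hs1 (hapos i)
  have hMiσ : ∀ i, HasMellin (fun t : ℝ => ((g i t : ℝ) : ℂ)) (σ:ℂ) ((a i : ℂ) ^ (-(σ:ℂ)) * Bσ) :=
    fun i => hasMellin_scaled (by rw [hσre]; exact hs0) (by rw [hσre]; exact hs1) (hapos i)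
  have hFint : ∀ i, Integrable (F i) (volume.restrict (Ioi 0)) := fun i => by
    simpa only [MellinConvergent, IntegrableOn, smul_eq_mul] using (hMi i).1
  have hFσint : ∀ i, Integrable (Fσ i) (volume.restrict (Ioi 0)) := fun i => by
    simpa only [MellinConvergent, IntegrableOn, smul_eq_mul] using (hMiσ i).1
  have hgpos : ∀ i, ∀ t : ℝ, 0 < t → 0 < g i t := fun i t ht => by
    have := hapos i
    positivity
  -- norms of F i
  have hFnorm : ∀ i, ∀ t ∈ Ioi (0:ℝ), ‖F i t‖ = t ^ (σ - 1) * g i t := fun i t ht => by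
    have ht' : (0:ℝ) < t := ht
    rw [hF, norm_mul,
      Complex.norm_cpow_eq_rpow_re_of_pos ht', Complex.norm_real, Real.norm_eq_abs,
      abs_of_pos (hgpos i t ht')]
    simp [Complex.sub_re, hσ]
  have hFσeq : ∀ i, ∀ t ∈ Ioi (0:ℝ), Fσ i t = ((t ^ (σ - 1) * g i t : ℝ) : ℂ) := fun i t ht => by
    have ht' : (0:ℝ) < t := ht
    rw [hFσ, ofReal_mul, Complex.ofReal_cpow ht'.le]
    push_cast
    ring
  -- value of the norm integrals
  have hNval : ∀ i, (∫ t in Ioi (0:ℝ), ‖F i t‖) = (a i) ^ (-σ) * Bσ.re := fun i => by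
    rw [setIntegral_congr_fun measurableSet_Ioi (hFnorm i)]
    have h1 : ((∫ t in Ioi (0:ℝ), Fσ i t)).re = ∫ t in Ioi (0:ℝ), (t ^ (σ - 1) * g i t : ℝ) := by
      rw [setIntegral_congr_fun measurableSet_Ioi (hFσeq i),
        show (∫ x in Ioi (0:ℝ), ((x ^ (σ - 1) * g i x : ℝ) : ℂ)) =
          (((∫ x in Ioi (0:ℝ), (x ^ (σ - 1) * g i x : ℝ)) : ℝ) : ℂ) from integral_ofReal,
        ofReal_re]
    rw [← h1]
    have h2 : (∫ t in Ioi (0:ℝ), Fσ i t) = (a i : ℂ) ^ (-(σ:ℂ)) * Bσ := by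
      have := (hMiσ i).2
      rw [mellin] at this
      simpa only [smul_eq_mul] using this
    rw [h2]
    have h3 : ((a i : ℂ)) ^ (-(σ:ℂ)) = (((a i) ^ (-σ) : ℝ) : ℂ) := by
      rw [Complex.ofReal_cpow (hapos i).le]
      push_cast
      ring_nf
    rw [h3, re_ofReal_mul]
  have hgeom : Summable (fun i : ℕ => (q ^ σ) ^ i) :=
    summable_geometric_of_lt_one (Real.rpow_nonneg hq0.le σ)
      (Real.rpow_lt_one hq0.le hq1 hs0)
  have hNsum : Summable (fun i => ∫ t in Ioi (0:ℝ), ‖F i t‖) := by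
    rw [show (fun i => ∫ t in Ioi (0:ℝ), ‖F i t‖) = fun i => (q ^ σ) ^ i * Bσ.re from
      funext fun i => by rw [hNval i, ha]; simp only []; rw [rpow_zpow_eq hq0]]
    exact hgeom.mul_right _
  -- pointwise summability
  have hgsum : ∀ t : ℝ, t ∈ Ioi (0:ℝ) → Summable (fun i => g i t) := fun t ht => by
    have ht' : (0:ℝ) < t := ht
    refine Summable.of_nonneg_of_le (fun i => (hgpos i t ht').le) (fun i => ?_)
      ((summable_geometric_of_lt_one hq0.le hq1).div_const t)
    have hai := hapos i
    have h1 : t * a i ≤ 1 + t * a i := by linarith [mul_pos ht' hai]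
    have h2 : g i t ≤ 1 / (t * a i) := by
      apply one_div_le_one_div_of_le (mul_pos ht' hai) h1
    refine h2.trans (le_of_eq ?_)
    have h3 : a i = (q ^ i)⁻¹ := by rw [ha]; simp [zpow_neg]
    rw [h3]
    field_simp
  have hHasSumF : ∀ t : ℝ, t ∈ Ioi (0:ℝ) →
      HasSum (fun i => F i t) ((t:ℂ) ^ (s-1) * h t) := fun t ht => by
    rw [hh t]
    have h1 : HasSum (fun i => g i t) (∑' i, g i t) := (hgsum t ht).hasSum
    have h2 : HasSum (fun i => ((g i t : ℝ) : ℂ)) (((∑' i, g i t : ℝ)) : ℂ) :=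
      Complex.hasSum_ofReal.mpr h1
    exact h2.mul_left ((t:ℂ) ^ (s-1))
  -- measurability of the full integrand
  have hGmeas : AEStronglyMeasurable (fun t : ℝ => (t:ℂ) ^ (s-1) * h t)
      (volume.restrict (Ioi 0)) := by
    apply aestronglyMeasurable_of_tendsto_ae Filter.atTop
      (f := fun n (t : ℝ) => ∑ i ∈ Finset.range n, F i t)
    · exact fun n => Finset.aestronglyMeasurable_fun_sum _ fun i _ => (hFint i).aestronglyMeasurable
    · filter_upwards [ae_restrict_mem measurableSet_Ioi] with t ht
      exact (hHasSumF t ht).tendsto_sum_nat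
  -- finiteness
  have hlintF : ∀ i, (∫⁻ t in Ioi (0:ℝ), (‖F i t‖₊ : ENNReal)) =
      ENNReal.ofReal (∫ t in Ioi (0:ℝ), ‖F i t‖) := fun i =>
    (ofReal_integral_norm_eq_lintegral_enorm (hFint i)).symm
  have hNnonneg : ∀ i, 0 ≤ ∫ t in Ioi (0:ℝ), ‖F i t‖ := fun i =>
    integral_nonneg fun t => norm_nonneg _
  have hlintsum : (∑' i, ∫⁻ t in Ioi (0:ℝ), (‖F i t‖₊ : ENNReal)) ≠ ⊤ := by
    simp_rw [hlintF]
    rw [← ENNReal.ofReal_tsum_of_nonneg hNnonneg hNsum]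
    exact ENNReal.ofReal_ne_top
  have hbound : ∀ᵐ (t : ℝ) ∂(volume.restrict (Ioi (0:ℝ))),
      (‖(t:ℂ) ^ (s-1) * h t‖₊ : ENNReal) ≤ ∑' i, (‖F i t‖₊ : ENNReal) := by
    filter_upwards [ae_restrict_mem measurableSet_Ioi] with t ht
    have hsn : Summable fun i => ‖F i t‖ := by
      rw [show (fun i => ‖F i t‖) = fun i => t ^ (σ - 1) * g i t from
        funext fun i => hFnorm i t ht]
      exact (hgsum t ht).mul_left _
    have h1 : ‖(t:ℂ) ^ (s-1) * h t‖ ≤ ∑' i, ‖F i t‖ := by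
      rw [← (hHasSumF t ht).tsum_eq]
      exact norm_tsum_le_tsum_norm hsn
    calc (‖(t:ℂ) ^ (s-1) * h t‖₊ : ENNReal)
        = ENNReal.ofReal ‖(t:ℂ) ^ (s-1) * h t‖ := (ofReal_norm _).symm
      _ ≤ ENNReal.ofReal (∑' i, ‖F i t‖) := ENNReal.ofReal_le_ofReal h1
      _ = ∑' i, ENNReal.ofReal ‖F i t‖ :=
          ENNReal.ofReal_tsum_of_nonneg (fun i => norm_nonneg _) hsn
      _ = ∑' i, (‖F i t‖₊ : ENNReal) := by simp_rw [ofReal_norm, enorm_eq_nnnorm]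
  have hHFI : HasFiniteIntegral (fun t : ℝ => (t:ℂ) ^ (s-1) * h t)
      (volume.restrict (Ioi 0)) := by
    show (∫⁻ (t : ℝ) in Ioi (0:ℝ), (‖(t:ℂ) ^ (s-1) * h t‖₊ : ENNReal)) < ⊤
    calc (∫⁻ (t : ℝ) in Ioi (0:ℝ), (‖(t:ℂ) ^ (s-1) * h t‖₊ : ENNReal))
        ≤ ∫⁻ (t : ℝ) in Ioi (0:ℝ), ∑' i, (‖F i t‖₊ : ENNReal) := lintegral_mono_ae hbound
      _ = ∑' i, ∫⁻ (t : ℝ) in Ioi (0:ℝ), (‖F i t‖₊ : ENNReal) :=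
          lintegral_tsum fun i => (hFint i).aestronglyMeasurable.enorm
      _ < ⊤ := lt_top_iff_ne_top.mpr hlintsum
  have hconv : MellinConvergent h s := by
    have : Integrable (fun t : ℝ => (t:ℂ) ^ (s-1) * h t) (volume.restrict (Ioi 0)) :=
      ⟨hGmeas, hHFI⟩
    simpa only [MellinConvergent, IntegrableOn, smul_eq_mul] using this
  refine ⟨hconv, ?_⟩
  -- value
  have hmel : mellin h s = ∑' i, ((a i : ℂ) ^ (-s) * B) := by
    rw [mellin]
    simp_rw [smul_eq_mul]
    have hswap := integral_tsum_of_summable_integral_norm hFint hNsum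
    have h1 : (∫ t in Ioi (0:ℝ), (t:ℂ) ^ (s-1) * h t) = ∫ t in Ioi (0:ℝ), ∑' i, F i t :=
      setIntegral_congr_fun measurableSet_Ioi fun t ht => ((hHasSumF t ht).tsum_eq).symm
    rw [h1, ← hswap]
    congr 1
    funext i
    have := (hMi i).2
    rw [mellin] at this
    simpa only [smul_eq_mul] using this
  rw [hmel]
  have hqnorm : ‖(q:ℂ) ^ s‖ < 1 := by
    rw [Complex.norm_cpow_eq_rpow_re_of_pos hq0]
    exact Real.rpow_lt_one hq0.le hq1 hs0
  have h2 : ∀ i : ℕ, (a i : ℂ) ^ (-s) * B = ((q:ℂ) ^ s) ^ i * B := fun i => by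
    rw [ha]; simp only []; rw [cpow_zpow_eq hq0]
  rw [tsum_congr h2, tsum_mul_right, tsum_geometric_of_norm_lt_one hqnorm, one_div]
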